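/- Let η, τ, λ, m ∈ ℝ with m ≠ 0, let c > 0, set d = η² − τ² − λ² and g(p) = λ + 2pc/√(p² + (mc)²), and assume (d/4 − c²)² ≠ λ²c². Then there exist constants C > 0 and P > 0 such that for every sign ς ∈ {+1, −1} and every p ∈ ℝ with |p| ≥ P one has |η + ς·√(τ² + g(p)²)| ≥ C; equivalently, |√(p²+1)·(η + ς√(τ² + g(p)²))| ≥ C·√(p² + 1) for |p| ≥ P. -/

import Mathlib

open Filter Topology

lemma key_ne (η τ lam c : ℝ)
    (hnc : ((η ^ 2 - τ ^ 2 - lam ^ 2) / 4 - c ^ 2) ^ 2 ≠ lam ^ 2 * c ^ 2)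
    (ς ε : ℝ) (hς : ς = 1 ∨ ς = -1) (hε : ε = 1 ∨ ε = -1) :
    η + ς * Real.sqrt (τ ^ 2 + (lam + ε * (2 * c)) ^ 2) ≠ 0 := by
  intro h
  have hS0 : (0:ℝ) ≤ τ ^ 2 + (lam + ε * (2 * c)) ^ 2 := by positivity
  have hS := Real.sq_sqrt hS0
  have hη2 : η ^ 2 = τ ^ 2 + (lam + ε * (2 * c)) ^ 2 := by
    rcases hς with rfl | rfl
    · linear_combination (η - Real.sqrt (τ ^ 2 + (lam + ε * (2 * c)) ^ 2)) * h + hS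
    · linear_combination (η + Real.sqrt (τ ^ 2 + (lam + ε * (2 * c)) ^ 2)) * h + hS
  apply hnc
  rcases hε with rfl | rfl
  · linear_combination ((((η ^ 2 - τ ^ 2 - lam ^ 2) / 4 - c ^ 2) + lam * c) / 4) * hη2
  · linear_combination ((((η ^ 2 - τ ^ 2 - lam ^ 2) / 4 - c ^ 2) - lam * c) / 4) * hη2

lemma ev_half {l : Filter ℝ} (f : ℝ → ℝ) (L : ℝ) (hL : L ≠ 0)
    (hf : Tendsto f l (nhds L)) : ∀ᶠ p in l, |L| / 2 ≤ |f p| := by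
  have h := hf.eventually (Metric.ball_mem_nhds L (half_pos (abs_pos.2 hL)))
  filter_upwards [h] with p hp
  have : |f p - L| < |L| / 2 := by
    simpa [Real.dist_eq] using hp
  have h2 := abs_sub_abs_le_abs_sub L (f p)
  have : |L - f p| = |f p - L| := abs_sub_comm _ _
  linarith [abs_sub_abs_le_abs_sub L (f p), abs_sub_comm L (f p) ▸ ‹|f p - L| < |L|/2›]

theorem stmt_15 (η τ lam m c : ℝ) (hm : m ≠ 0) (hc : 0 < c)
    (hnc : ((η ^ 2 - τ ^ 2 - lam ^ 2) / 4 - c ^ 2) ^ 2 ≠ lam ^ 2 * c ^ 2) :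
    ∃ C > 0, ∃ P > 0, ∀ ς : ℝ, ς = 1 ∨ ς = -1 → ∀ p : ℝ, |p| ≥ P →
      C ≤ |η + ς * Real.sqrt (τ ^ 2 +
        (lam + 2 * p * c / Real.sqrt (p ^ 2 + (m * c) ^ 2)) ^ 2)| := by
  set k : ℝ := m * c with hk
  have hk0 : k ≠ 0 := mul_ne_zero hm hc.ne'
  set u : ℝ → ℝ := fun p => p / Real.sqrt (p ^ 2 + k ^ 2) with hu
  -- limit of u at atTop is 1
  have h1 : Tendsto (fun p : ℝ => p ^ 2 + k ^ 2) atTop atTop :=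
    tendsto_atTop_add_const_right _ _ (tendsto_pow_atTop two_ne_zero)
  have h3 : Tendsto (fun p : ℝ => k ^ 2 * (p ^ 2 + k ^ 2)⁻¹) atTop (nhds 0) := by
    simpa using (h1.inv_tendsto_atTop).const_mul (k ^ 2)
  have h2 : Tendsto (fun p : ℝ => 1 - k ^ 2 / (p ^ 2 + k ^ 2)) atTop (nhds 1) := by
    simpa [div_eq_mul_inv] using ((tendsto_const_nhds (α := ℝ) (x := (1:ℝ)) (f := atTop)).sub h3)
  have h4 : Tendsto (fun p : ℝ => Real.sqrt (1 - k ^ 2 / (p ^ 2 + k ^ 2))) atTop (nhds 1) := by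
    simpa using h2.sqrt
  have hueq : ∀ p : ℝ, 0 < p →
      Real.sqrt (1 - k ^ 2 / (p ^ 2 + k ^ 2)) = u p := by
    intro p hp
    have hpos : (0:ℝ) < p ^ 2 + k ^ 2 := by positivity
    have h5 : 1 - k ^ 2 / (p ^ 2 + k ^ 2) = p ^ 2 / (p ^ 2 + k ^ 2) := by
      field_simp
      ring
    rw [h5, Real.sqrt_div (by positivity), Real.sqrt_sq hp.le]
  have hut : Tendsto u atTop (nhds 1) := by
    apply h4.congr'
    filter_upwards [eventually_gt_atTop (0:ℝ)] with p hp using hueq p hp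
  have huneg : ∀ p : ℝ, u (-p) = -u p := by
    intro p; simp [hu, neg_div]
  have hub : Tendsto u atBot (nhds (-1)) := by
    have h5 : Tendsto (fun p : ℝ => u (-p)) atBot (nhds 1) :=
      hut.comp tendsto_neg_atBot_atTop
    have h6 : Tendsto (fun p : ℝ => -u (-p)) atBot (nhds (-1)) := h5.neg
    simpa [huneg] using h6
  -- limits of the full function
  have hF : ∀ ς ε : ℝ, ∀ l : Filter ℝ, Tendsto u l (nhds ε) →
      Tendsto (fun p => η + ς * Real.sqrt (τ ^ 2 + (lam + 2 * c * u p) ^ 2)) l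
        (nhds (η + ς * Real.sqrt (τ ^ 2 + (lam + ε * (2 * c)) ^ 2))) := by
    intro ς ε l hl
    have h5 : Tendsto (fun p => lam + 2 * c * u p) l (nhds (lam + ε * (2 * c))) := by
      rw [show lam + ε * (2 * c) = lam + 2 * c * ε from by ring]
      exact (tendsto_const_nhds (x := lam)).add (hl.const_mul (2 * c))
    have h6 : Tendsto (fun p => τ ^ 2 + (lam + 2 * c * u p) ^ 2) l
        (nhds (τ ^ 2 + (lam + ε * (2 * c)) ^ 2)) :=
      tendsto_const_nhds.add (h5.pow 2)
    exact tendsto_const_nhds.add ((h6.sqrt).const_mul ς)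
  -- the four limit values
  set Lpp := η + 1 * Real.sqrt (τ ^ 2 + (lam + 1 * (2 * c)) ^ 2) with hLpp
  set Lmp := η + (-1) * Real.sqrt (τ ^ 2 + (lam + 1 * (2 * c)) ^ 2) with hLmp
  set Lpm := η + 1 * Real.sqrt (τ ^ 2 + (lam + (-1) * (2 * c)) ^ 2) with hLpm
  set Lmm := η + (-1) * Real.sqrt (τ ^ 2 + (lam + (-1) * (2 * c)) ^ 2) with hLmm
  have hLpp0 : Lpp ≠ 0 := key_ne η τ lam c hnc 1 1 (Or.inl rfl) (Or.inl rfl)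
  have hLmp0 : Lmp ≠ 0 := key_ne η τ lam c hnc (-1) 1 (Or.inr rfl) (Or.inl rfl)
  have hLpm0 : Lpm ≠ 0 := key_ne η τ lam c hnc 1 (-1) (Or.inl rfl) (Or.inr rfl)
  have hLmm0 : Lmm ≠ 0 := key_ne η τ lam c hnc (-1) (-1) (Or.inr rfl) (Or.inr rfl)
  -- eventual bounds
  have e1 := ev_half _ _ hLpp0 (hF 1 1 atTop hut)
  have e2 := ev_half _ _ hLmp0 (hF (-1) 1 atTop hut)
  have e3 := ev_half _ _ hLpm0 (hF 1 (-1) atBot hub)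
  have e4 := ev_half _ _ hLmm0 (hF (-1) (-1) atBot hub)
  obtain ⟨P1, hP1⟩ := (eventually_atTop.1 (e1.and e2))
  obtain ⟨P2, hP2⟩ := (eventually_atBot.1 (e3.and e4))
  set C : ℝ := min (min (|Lpp| / 2) (|Lmp| / 2)) (min (|Lpm| / 2) (|Lmm| / 2)) with hC
  have hC0 : 0 < C := by
    have := abs_pos.2 hLpp0; have := abs_pos.2 hLmp0
    have := abs_pos.2 hLpm0; have := abs_pos.2 hLmm0
    simp only [hC, lt_min_iff]
    constructor <;> constructor <;> linarith
  refine ⟨C, hC0, max 1 (max P1 (-P2)), by positivity, ?_⟩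
  intro ς hς p hp
  have hexpr : ∀ q : ℝ, η + ς * Real.sqrt (τ ^ 2 +
      (lam + 2 * q * c / Real.sqrt (q ^ 2 + (m * c) ^ 2)) ^ 2)
      = η + ς * Real.sqrt (τ ^ 2 + (lam + 2 * c * u q) ^ 2) := by
    intro q
    have : 2 * q * c / Real.sqrt (q ^ 2 + k ^ 2) = 2 * c * u q := by
      simp only [hu]; ring
    rw [← hk, this]
  rw [hexpr]
  have hp' : p ≥ max 1 (max P1 (-P2)) ∨ p ≤ -(max 1 (max P1 (-P2))) := by
    rcases le_abs.1 hp with h | h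
    · exact Or.inl h
    · exact Or.inr (by linarith)
  rcases hp' with hcase | hcase
  · have hpP1 : P1 ≤ p := le_trans (le_trans (le_max_left _ _) (le_max_right 1 _)) hcase
    obtain ⟨b1, b2⟩ := hP1 p hpP1
    rcases hς with rfl | rfl
    · calc C ≤ |Lpp| / 2 := le_trans (min_le_left _ _) (min_le_left _ _)
        _ ≤ _ := b1
    · calc C ≤ |Lmp| / 2 := le_trans (min_le_left _ _) (min_le_right _ _)
        _ ≤ _ := b2
  · have hpP2 : p ≤ P2 := by
      have : -P2 ≤ max 1 (max P1 (-P2)) := le_trans (le_max_right P1 _) (le_max_right 1 _)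
      linarith
    obtain ⟨b1, b2⟩ := hP2 p hpP2
    rcases hς with rfl | rfl
    · calc C ≤ |Lpm| / 2 := le_trans (min_le_right _ _) (min_le_left _ _)
        _ ≤ _ := b1
    · calc C ≤ |Lmm| / 2 := le_trans (min_le_right _ _) (min_le_right _ _)
        _ ≤ _ := b2
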